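/- arXiv:1605.09030 — 2 statements merged into one kernel-verified Lean document; each statement's English description precedes it below -/
import Mathlib

section
/- Correctness of the destination-point formula: let φ₁ ∈ (−π/2, π/2) be a latitude, λ₁ ∈ ℝ a longitude, θ ∈ ℝ a bearing angle, and δ ∈ ℝ an angular distance. Define s₂ = sin φ₁ · cos δ + cos φ₁ · sin δ · cos θ and φ₂ = arcsin s₂, and assume cos φ₂ > 0. Define λ₂ = λ₁ + arg(x + i·y), where x = cos δ − sin φ₁ · s₂, y = sin θ · sin δ · cos φ₁, and arg denotes the principal argument of a nonzero complex number (equivalently atan2(y, x)). Then sin φ₁ · sin φ₂ + cos φ₁ · cos φ₂ · cos(λ₂ − λ₁) = cos δ; equivalently, the angular distance between v(φ₁,λ₁) and v(φ₂,λ₂) on the unit sphere has cosine equal to cos δ. -/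
open Real
open scoped RealInnerProductSpace

/-- The point on the unit sphere in ℝ³ with latitude φ and longitude λ. -/
noncomputable def sphPoint (φ lam : ℝ) : EuclideanSpace ℝ (Fin 3) :=
  WithLp.toLp 2 ![Real.cos φ * Real.cos lam, Real.cos φ * Real.sin lam, Real.sin φ]

theorem destination_point_formula (φ₁ lam₁ θ δ : ℝ)
    (hφ₁ : φ₁ ∈ Set.Ioo (-(π / 2)) (π / 2))
    (s₂ : ℝ)
    (hs₂ : s₂ = Real.sin φ₁ * Real.cos δ + Real.cos φ₁ * Real.sin δ * Real.cos θ)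
    (φ₂ : ℝ) (hφ₂ : φ₂ = Real.arcsin s₂)
    (hcosφ₂ : 0 < Real.cos φ₂)
    (lam₂ : ℝ)
    (hlam₂ : lam₂ = lam₁ + Complex.arg
        (((Real.cos δ - Real.sin φ₁ * s₂ : ℝ) : ℂ)
          + ((Real.sin θ * Real.sin δ * Real.cos φ₁ : ℝ) : ℂ) * Complex.I)) :
    Real.sin φ₁ * Real.sin φ₂ + Real.cos φ₁ * Real.cos φ₂ * Real.cos (lam₂ - lam₁)
        = Real.cos δ ∧
      Real.cos (Real.arccos ⟪sphPoint φ₁ lam₁, sphPoint φ₂ lam₂⟫) = Real.cos δ := by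
  have p1 := Real.sin_sq_add_cos_sq φ₁
  have pδ := Real.sin_sq_add_cos_sq δ
  have pθ := Real.sin_sq_add_cos_sq θ
  have hs₂le : s₂ ^ 2 ≤ 1 := by
    have hid : 1 - (Real.sin φ₁ * Real.cos δ + Real.cos φ₁ * Real.sin δ * Real.cos θ) ^ 2
        = (Real.sin φ₁ * Real.sin δ * Real.cos θ - Real.cos φ₁ * Real.cos δ) ^ 2
          + (Real.sin δ * Real.sin θ) ^ 2 := by
      linear_combination (-(Real.sin δ ^ 2 * Real.cos θ ^ 2 + Real.cos δ ^ 2)) * p1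
        - Real.sin δ ^ 2 * pθ - pδ
    rw [hs₂]
    nlinarith [sq_nonneg (Real.sin φ₁ * Real.sin δ * Real.cos θ - Real.cos φ₁ * Real.cos δ),
      sq_nonneg (Real.sin δ * Real.sin θ)]
  have hsin₂ : Real.sin φ₂ = s₂ := by
    rw [hφ₂, Real.sin_arcsin] <;> nlinarith
  have p2 := Real.sin_sq_add_cos_sq φ₂
  have hcos₂sq : Real.cos φ₂ ^ 2 = 1 - s₂ ^ 2 := by
    have h : s₂ ^ 2 = Real.sin φ₂ ^ 2 := by rw [hsin₂]
    linarith
  have hcosφ₁ : 0 < Real.cos φ₁ := Real.cos_pos_of_mem_Ioo hφ₁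
  set z : ℂ := ((Real.cos δ - Real.sin φ₁ * s₂ : ℝ) : ℂ)
      + ((Real.sin θ * Real.sin δ * Real.cos φ₁ : ℝ) : ℂ) * Complex.I with hz
  have hre : z.re = Real.cos δ - Real.sin φ₁ * s₂ := by
    simp only [hz, Complex.add_re, Complex.ofReal_re, Complex.mul_re, Complex.I_re,
      Complex.I_im, Complex.ofReal_im]
    ring
  have him : z.im = Real.sin θ * Real.sin δ * Real.cos φ₁ := by
    simp only [hz, Complex.add_im, Complex.ofReal_im, Complex.mul_im, Complex.I_re,
      Complex.I_im, Complex.ofReal_re]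
    ring
  have habs : ‖z‖ = Real.cos φ₁ * Real.cos φ₂ := by
    have h1 : ‖z‖ ^ 2 = (Real.cos φ₁ * Real.cos φ₂) ^ 2 := by
      rw [Complex.sq_norm, Complex.normSq_apply, hre, him, mul_pow, hcos₂sq, hs₂]
      linear_combination ((Real.sin φ₁ * Real.cos δ + Real.cos φ₁ * Real.sin δ * Real.cos θ) ^ 2
          - Real.cos δ ^ 2) * p1
        + Real.cos φ₁ ^ 2 * Real.sin δ ^ 2 * pθ + Real.cos φ₁ ^ 2 * pδ
    have := norm_nonneg z
    nlinarith [mul_pos hcosφ₁ hcosφ₂]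
  have hz0 : z ≠ 0 := by
    intro h
    rw [h, norm_zero] at habs
    nlinarith [mul_pos hcosφ₁ hcosφ₂]
  have harg : Real.cos (lam₂ - lam₁) = z.re / ‖z‖ := by
    rw [hlam₂, add_sub_cancel_left, Complex.cos_arg hz0]
  have key : Real.cos φ₁ * Real.cos φ₂ * Real.cos (lam₂ - lam₁)
      = Real.cos δ - Real.sin φ₁ * s₂ := by
    have hne : Real.cos φ₁ * Real.cos φ₂ ≠ 0 := ne_of_gt (mul_pos hcosφ₁ hcosφ₂)
    rw [harg, hre, habs]
    field_simp
  have main : Real.sin φ₁ * Real.sin φ₂ + Real.cos φ₁ * Real.cos φ₂ * Real.cos (lam₂ - lam₁)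
      = Real.cos δ := by rw [hsin₂, key]; ring
  refine ⟨main, ?_⟩
  have hinner : ⟪sphPoint φ₁ lam₁, sphPoint φ₂ lam₂⟫
      = Real.sin φ₁ * Real.sin φ₂ + Real.cos φ₁ * Real.cos φ₂ * Real.cos (lam₂ - lam₁) := by
    simp only [sphPoint, PiLp.inner_apply, PiLp.toLp_apply, RCLike.inner_apply, conj_trivial,
      Fin.sum_univ_three, Matrix.cons_val_zero, Matrix.cons_val_one, Matrix.head_cons,
      Matrix.cons_val_two, Matrix.tail_cons]
    rw [Real.cos_sub]
    ring
  rw [hinner, main, Real.cos_arccos (Real.neg_one_le_cos δ) (Real.cos_le_one δ)]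
end

section
/- The bearing formula inverts the destination-point formula: let φ₁ ∈ (−π/2, π/2), λ₁ ∈ ℝ, let δ ∈ (0, π) and θ ∈ (−π, π]. Define s₂ = sin φ₁ · cos δ + cos φ₁ · sin δ · cos θ, φ₂ = arcsin s₂, assume cos φ₂ > 0, and define λ₂ = λ₁ + arg((cos δ − sin φ₁ · s₂) + i · sin θ · sin δ · cos φ₁). Set ȳ = sin(λ₂ − λ₁) · cos φ₂ and x̄ = cos φ₁ · sin φ₂ − sin φ₁ · cos φ₂ · cos(λ₂ − λ₁). Then (x̄, ȳ) = (sin δ · cos θ, sin δ · sin θ), and consequently arg(x̄ + i·ȳ) = θ, where arg denotes the principal argument of a nonzero complex number (equivalently atan2(ȳ, x̄)). -/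
open Real

private lemma key_ident (a b c s t u : ℝ) (h1 : a^2 + b^2 = 1) (h2 : c^2 + s^2 = 1)
    (h3 : t^2 + u^2 = 1) :
    (c - a*(a*c + b*s*t))^2 + (u*s*b)^2 = b^2*(1 - (a*c + b*s*t)^2) := by
  linear_combination ((a*c + b*s*t)^2 - c^2) * h1 + b^2 * h2 + b^2*s^2 * h3

theorem bearing_inverts_destination (φ₁ lam₁ δ θ : ℝ)
    (hφ₁ : φ₁ ∈ Set.Ioo (-(π / 2)) (π / 2))
    (hδ : δ ∈ Set.Ioo 0 π)
    (hθ : θ ∈ Set.Ioc (-π) π)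
    (s₂ : ℝ)
    (hs₂ : s₂ = Real.sin φ₁ * Real.cos δ + Real.cos φ₁ * Real.sin δ * Real.cos θ)
    (φ₂ : ℝ) (hφ₂ : φ₂ = Real.arcsin s₂)
    (hcosφ₂ : 0 < Real.cos φ₂)
    (lam₂ : ℝ)
    (hlam₂ : lam₂ = lam₁ + Complex.arg
        (((Real.cos δ - Real.sin φ₁ * s₂ : ℝ) : ℂ)
          + ((Real.sin θ * Real.sin δ * Real.cos φ₁ : ℝ) : ℂ) * Complex.I))
    (ybar xbar : ℝ)
    (hybar : ybar = Real.sin (lam₂ - lam₁) * Real.cos φ₂)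
    (hxbar : xbar = Real.cos φ₁ * Real.sin φ₂
        - Real.sin φ₁ * Real.cos φ₂ * Real.cos (lam₂ - lam₁)) :
    (xbar, ybar) = (Real.sin δ * Real.cos θ, Real.sin δ * Real.sin θ) ∧
      Complex.arg ((xbar : ℂ) + (ybar : ℂ) * Complex.I) = θ := by
  obtain ⟨hφ₁l, hφ₁r⟩ := hφ₁
  have hb : 0 < Real.cos φ₁ := Real.cos_pos_of_mem_Ioo ⟨hφ₁l, hφ₁r⟩
  set a := Real.sin φ₁ with ha
  set b := Real.cos φ₁ with hbdef
  set c := Real.cos δ with hc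
  set s := Real.sin δ with hsdef
  set t := Real.cos θ with ht
  set u := Real.sin θ with hu
  have h1 : a^2 + b^2 = 1 := Real.sin_sq_add_cos_sq φ₁
  have h2 : c^2 + s^2 = 1 := by rw [hc, hsdef]; exact Real.cos_sq_add_sin_sq δ
  have h3 : t^2 + u^2 = 1 := by rw [ht, hu]; exact Real.cos_sq_add_sin_sq θ
  have hkey : (c - a*s₂)^2 + (u*s*b)^2 = b^2*(1 - s₂^2) := by
    rw [hs₂]; exact key_ident a b c s t u h1 h2 h3
  -- |s₂| ≤ 1
  have hs₂sq : s₂^2 ≤ 1 := by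
    nlinarith [hkey, sq_nonneg (c - a*s₂), sq_nonneg (u*s*b), mul_pos hb hb, sq_abs b]
  have hs₂le : -1 ≤ s₂ ∧ s₂ ≤ 1 :=
    ⟨by nlinarith [hs₂sq, sq_nonneg (s₂ + 1)], by nlinarith [hs₂sq, sq_nonneg (s₂ - 1)]⟩
  have hsinφ₂ : Real.sin φ₂ = s₂ := by rw [hφ₂]; exact Real.sin_arcsin hs₂le.1 hs₂le.2
  have hcos₂ : Real.cos φ₂ = Real.sqrt (1 - s₂^2) := by
    rw [hφ₂, Real.cos_arcsin]
  -- the complex number z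
  set x := c - a * s₂ with hx
  set y := u * s * b with hy
  have hxy : x^2 + y^2 = (b * Real.cos φ₂)^2 := by
    rw [hcos₂, show (b * Real.sqrt (1 - s₂^2))^2 = b^2 * Real.sqrt (1 - s₂^2)^2 from by ring,
      Real.sq_sqrt (by linarith)]; exact hkey
  have hr : 0 < b * Real.cos φ₂ := mul_pos hb hcosφ₂
  set z : ℂ := ((x : ℝ) : ℂ) + ((y : ℝ) : ℂ) * Complex.I with hz
  have hzre : z.re = x := by simp [hz]
  have hzim : z.im = y := by simp [hz]
  have habs : ‖z‖ = b * Real.cos φ₂ := by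
    rw [Complex.norm_def, Complex.normSq_apply, hzre, hzim]
    rw [show x * x + y * y = (b * Real.cos φ₂)^2 by rw [← hxy]; ring]
    exact Real.sqrt_sq hr.le
  have hzne : z ≠ 0 := by
    intro h
    rw [h, norm_zero] at habs
    exact hr.ne' habs.symm
  have harg : lam₂ - lam₁ = Complex.arg z := by
    rw [hlam₂]; ring
  have hsin : Real.sin (lam₂ - lam₁) = y / (b * Real.cos φ₂) := by
    rw [harg, Complex.sin_arg, hzim, habs]
  have hcos : Real.cos (lam₂ - lam₁) = x / (b * Real.cos φ₂) := by
    rw [harg, Complex.cos_arg hzne, hzre, habs]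
  -- compute ybar and xbar
  have hybar' : ybar = s * u := by
    rw [hybar, hsin]
    field_simp
    rw [hy]; ring
  have hxbar' : xbar = s * t := by
    rw [hxbar, hcos, hsinφ₂]
    field_simp
    rw [hx, hs₂]
    linear_combination (b * s * t + a * c) * h1
  have hs_pos : 0 < s := Real.sin_pos_of_pos_of_lt_pi hδ.1 hδ.2
  constructor
  · rw [hybar', hxbar', Prod.mk.injEq]; exact ⟨by ring, by ring⟩
  · rw [hybar', hxbar']
    have : ((s * t : ℝ) : ℂ) + ((s * u : ℝ) : ℂ) * Complex.I
        = (s : ℂ) * (((t : ℝ) : ℂ) + ((u : ℝ) : ℂ) * Complex.I) := by push_cast; ring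
    rw [this, Complex.arg_real_mul _ hs_pos, ht, hu, Complex.ofReal_cos, Complex.ofReal_sin]
    exact Complex.arg_cos_add_sin_mul_I hθ
end
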